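/- For every t with 0 ≤ t < 1/6, the derivative of c₂ satisfies c₂′(t) = −(5·d(t)·c₂(t))/(2·q(t)·c(t)) − (6·a(t)·z₂(t)·c₂(t))/(q(t)·c(t)). -/

import Mathlib

set_option maxHeartbeats 1000000


noncomputable def pFun (t : ℝ) : ℝ := 1 - 6 * t

noncomputable def rFun (s t : ℝ) : ℝ := Real.exp (-(7776 / 25) * (1 - s) ^ 2 * t ^ 3)

noncomputable def qFun (t : ℝ) : ℝ := pFun t ^ 3 / 6

noncomputable def yFun (t : ℝ) : ℝ := pFun t ^ 2

noncomputable def aFun (s t : ℝ) : ℝ := (5 / 6) * s * (1 - s) ^ 2 * pFun t ^ 5 * rFun s t ^ 2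

noncomputable def c1Fun (s t : ℝ) : ℝ := (5 / 6) * s * (1 - s) * pFun t ^ 2 * rFun s t

noncomputable def c2Fun (s t : ℝ) : ℝ := (5 / 6) * (1 - s) ^ 2 * pFun t ^ 3 * rFun s t ^ 2

noncomputable def cFun (s t : ℝ) : ℝ := c1Fun s t * c2Fun s t

noncomputable def dFun (s t : ℝ) : ℝ := (5 / 6) * s * (1 - s) ^ 3 * pFun t ^ 7 * rFun s t ^ 3

noncomputable def z0Fun (s t : ℝ) : ℝ := (5 / 6) * (1 - s) ^ 5 * pFun t ^ 9 * rFun s t ^ 3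

noncomputable def z1Fun (s t : ℝ) : ℝ := (1 - s) ^ 4 * (1 - pFun t) * pFun t ^ 6 * rFun s t ^ 2

noncomputable def z2Fun (s t : ℝ) : ℝ :=
  (6 / 5) * (1 - s) ^ 3 * (1 - pFun t) ^ 2 * pFun t ^ 3 * rFun s t

theorem c2_hasDerivAt (s : ℝ) (hs0 : 0 < s) (hs1 : s < 1) (t : ℝ)
    (ht0 : 0 ≤ t) (ht : t < 1 / 6) :
    HasDerivAt (c2Fun s)
      (-(5 * dFun s t * c2Fun s t) / (2 * qFun t * cFun s t)
        - (6 * aFun s t * z2Fun s t * c2Fun s t) / (qFun t * cFun s t)) t := by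
  have hp : HasDerivAt pFun (-6) t := by
    exact ((hasDerivAt_const t (1:ℝ)).sub ((hasDerivAt_id t).const_mul 6)).congr_deriv (by norm_num)
  have hg : HasDerivAt (fun u : ℝ => -(7776 / 25) * (1 - s) ^ 2 * u ^ 3)
      (-(7776 / 25) * (1 - s) ^ 2 * (3 * t ^ 2)) t := by
    have h := (hasDerivAt_pow 3 t).const_mul (-(7776 / 25) * (1 - s) ^ 2)
    exact h.congr_deriv (by norm_num)
  have hr : HasDerivAt (rFun s)
      (rFun s t * (-(7776 / 25) * (1 - s) ^ 2 * (3 * t ^ 2))) t := by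
    unfold rFun
    exact hg.exp
  have key := ((hp.pow 3).mul (hr.pow 2)).const_mul ((5:ℝ) / 6 * (1 - s) ^ 2)
  have hfun : c2Fun s = fun u => 5 / 6 * (1 - s) ^ 2 * (pFun u ^ 3 * rFun s u ^ 2) := by
    funext u
    rw [c2Fun]
    ring
  rw [hfun]
  refine key.congr_deriv ?_
  have hpne : pFun t ≠ 0 := by
    have h : (0:ℝ) < 1 - 6 * t := by linarith
    simpa [pFun] using h.ne'
  have hrne : rFun s t ≠ 0 := (Real.exp_pos _).ne'
  have hsne : s ≠ 0 := hs0.ne'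
  have hs1ne : (1 : ℝ) - s ≠ 0 := by linarith
  have hp1 : 1 - pFun t = 6 * t := by rw [pFun]; ring
  simp only [dFun, c2Fun, cFun, c1Fun, qFun, aFun, z2Fun, hp1, Pi.pow_apply]
  push_cast
  generalize pFun t = P at hpne ⊢
  generalize rFun s t = R at hrne ⊢
  field_simp
  ring
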